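/- For all x ∈ [-π, π], 2·∑_{k=1}^∞ k^{-4}·cos(kx) = π^4/45 - (1/24)(x^2 - 2π|x|)^2. -/

import Mathlib

open Real

lemma bern4_eval (t : ℝ) :
    (Polynomial.map (algebraMap ℚ ℝ) (Polynomial.bernoulli 4)).eval t
      = t ^ 4 - 2 * t ^ 3 + t ^ 2 - 1 / 30 := by
  simp only [Polynomial.bernoulli_def, Finset.sum_range_succ, Finset.sum_range_zero,
    Polynomial.map_add, Polynomial.map_smul, Polynomial.map_monomial, Polynomial.map_zero,
    Polynomial.eval_add, Polynomial.eval_smul, Polynomial.eval_monomial, Polynomial.eval_zero,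
    bernoulli_zero, bernoulli_one, bernoulli_eq_bernoulli'_of_ne_one (by norm_num : (2:ℕ) ≠ 1),
    bernoulli_eq_bernoulli'_of_ne_one (by norm_num : (3:ℕ) ≠ 1),
    bernoulli_eq_bernoulli'_of_ne_one (by norm_num : (4:ℕ) ≠ 1),
    bernoulli'_two, bernoulli'_three, bernoulli'_four]
  norm_num [Nat.choose]
  ring

/-- For all `x ∈ [-π, π]`,
`2 ∑_{k≥1} cos (k x) / k⁴ = π⁴/45 - (1/24)(x² - 2π|x|)²`. -/
theorem stmt2 (x : ℝ) (hx : x ∈ Set.Icc (-π) π) :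
    2 * ∑' k : ℕ, Real.cos (((k : ℝ) + 1) * x) / ((k : ℝ) + 1) ^ 4
      = π ^ 4 / 45 - (1 / 24) * (x ^ 2 - 2 * π * |x|) ^ 2 := by
  have hπ : (0:ℝ) < π := pi_pos
  set t : ℝ := |x| / (2 * π) with ht
  have hxa : |x| ≤ π := abs_le.mpr ⟨hx.1, hx.2⟩
  have htmem : t ∈ Set.Icc (0:ℝ) 1 := by
    constructor
    · positivity
    · rw [div_le_one (by positivity)]
      nlinarith [abs_nonneg x]
  have h := hasSum_one_div_nat_pow_mul_cos (k := 2) (by norm_num) htmem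
  have h1 := (hasSum_nat_add_iff' (f := fun n : ℕ =>
      1 / (n : ℝ) ^ (2 * 2) * Real.cos (2 * π * n * t)) 1).mpr h
  have hfg : (fun n : ℕ => 1 / ((n + 1 : ℕ) : ℝ) ^ (2 * 2) * Real.cos (2 * π * ((n + 1 : ℕ) : ℝ) * t))
      = fun n : ℕ => Real.cos (((n : ℝ) + 1) * x) / ((n : ℝ) + 1) ^ 4 := by
    funext n
    have harg : 2 * π * ((n + 1 : ℕ) : ℝ) * t = ((n : ℝ) + 1) * |x| := by
      rw [ht]; push_cast; field_simp
    have hc : Real.cos (((n : ℝ) + 1) * |x|) = Real.cos (((n : ℝ) + 1) * x) := by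
      rcases abs_cases x with ⟨h1, _⟩ | ⟨h1, _⟩
      · rw [h1]
      · rw [h1, show ((n : ℝ) + 1) * -x = -(((n : ℝ) + 1) * x) by ring, Real.cos_neg]
    rw [harg, hc]
    push_cast
    ring
  rw [hfg] at h1
  rw [h1.tsum_eq, bern4_eval]
  have h0 : Real.cos (2 * π * ((0 : ℕ) : ℝ) * t) = 1 := by norm_num
  rw [Finset.sum_range_one, h0]
  norm_num [Nat.factorial]
  rw [ht]
  have h2π : (2 * π) ≠ 0 := by positivity
  field_simp
  rw [← sq_abs x]
  ring
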